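/- Let q = p^m with p an odd prime and let D be a skew set of F_q. Define the code C_D = {(Tr(a d))_{d∈D} : a ∈ F_q} of length n_3 = (q−1)/2 over F_p. Then for every 1 ≤ r ≤ m, the r-th generalized Hamming weight of C_D equals (1 − 1/p^r) · q/2. -/

import Mathlib

set_option maxHeartbeats 1000000


open scoped Classical in
/-- The `r`-th generalized Hamming weight of a linear code `C ≤ F_p^ι`. -/
noncomputable def ghw {p : ℕ} {ι : Type} [Fintype ι]
    (C : Submodule (ZMod p) (ι → ZMod p)) (r : ℕ) : ℕ :=
  sInf {k | ∃ U : Submodule (ZMod p) (ι → ZMod p), U ≤ C ∧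
    Module.finrank (ZMod p) ↥U = r ∧
    (Finset.univ.filter (fun i : ι => ∃ x ∈ U, x i ≠ 0)).card = k}

/-- `D ⊆ F_q^*` is a skew set if `D`, `-D` and `{0}` partition `F_q`. -/
def IsSkewSet {F : Type} [Field F] (D : Set F) : Prop :=
  (0 : F) ∉ D ∧ (∀ d ∈ D, -d ∉ D) ∧ ∀ x : F, x ≠ 0 → x ∈ D ∨ -x ∈ D

/-- Counting lemma: a finset `S` closed under negation and containing `0`
meets a skew set `D` in exactly `(|S| - 1)/2` elements. -/
lemma skew_card {F : Type} [Field F] [DecidableEq F] (D : Finset F)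
    (hD : IsSkewSet (↑D : Set F)) (S : Finset F) (h0 : (0 : F) ∈ S)
    (hneg : ∀ x ∈ S, -x ∈ S) :
    S.card = 2 * (S.filter (fun x => x ∈ D)).card + 1 := by
  obtain ⟨h0D, hDneg, hcov⟩ := hD
  set A := S.filter (fun x => x ∈ D) with hA
  set B := S.filter (fun x => -x ∈ D) with hB
  have hdisj : Disjoint A B := by
    rw [Finset.disjoint_left]
    intro x hx hx'
    rw [hA, Finset.mem_filter] at hx
    rw [hB, Finset.mem_filter] at hx'
    exact hDneg x hx.2 hx'.2
  have h0A : (0 : F) ∉ A ∪ B := by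
    simp only [Finset.mem_union, hA, hB, Finset.mem_filter, neg_zero]
    push_neg
    exact ⟨fun _ => h0D, fun _ => h0D⟩
  have hS : S = insert (0 : F) (A ∪ B) := by
    ext x
    simp only [Finset.mem_insert, Finset.mem_union, hA, hB, Finset.mem_filter]
    constructor
    · intro hx
      by_cases hx0 : x = 0
      · exact Or.inl hx0
      · rcases hcov x hx0 with h | h
        · exact Or.inr (Or.inl ⟨hx, h⟩)
        · exact Or.inr (Or.inr ⟨hx, h⟩)
    · rintro (rfl | ⟨h, _⟩ | ⟨h, _⟩) <;> first | exact h0 | exact h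
  have hcardBA : B.card = A.card := by
    apply Finset.card_bij (fun x _ => -x)
    · intro x hx
      rw [hB, Finset.mem_filter] at hx
      rw [hA, Finset.mem_filter]
      exact ⟨hneg x hx.1, hx.2⟩
    · intro a _ b _ h
      exact neg_injective h
    · intro b hb
      rw [hA, Finset.mem_filter] at hb
      refine ⟨-b, ?_, by simp⟩
      rw [hB, Finset.mem_filter]
      exact ⟨hneg b hb.1, by simpa using hb.2⟩
  rw [hS, Finset.card_insert_of_notMem h0A, Finset.card_union_of_disjoint hdisj,
    hcardBA]
  omega

/-- For a skew set `D`, the `r`-th generalized Hamming weight of `C_D` equals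
`(1 - 1/p^r)·q/2`, i.e. `d_r(C_D)·(2p^r) = (p^r - 1)·q`. -/
theorem stmt12 (p m : ℕ) [Fact p.Prime] (hp : Odd p)
    (F : Type) [Field F] [Fintype F] [Algebra (ZMod p) F]
    (hq : Fintype.card F = p ^ m)
    (D : Finset F) (hD : IsSkewSet (↑D : Set F))
    (L : F →ₗ[ZMod p] ({x // x ∈ D} → ZMod p))
    (hL : ∀ a (d : {x // x ∈ D}), L a d = Algebra.trace (ZMod p) F (a * (d : F)))
    (r : ℕ) (hr1 : 1 ≤ r) (hrm : r ≤ m) :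
    ghw (LinearMap.range L) r * (2 * p ^ r) = (p ^ r - 1) * p ^ m := by
  classical
  have hp1 : 1 < p := (Fact.out : p.Prime).one_lt
  have hfin : FiniteDimensional (ZMod p) F := Module.Finite.of_finite
  have halg : Algebra.IsAlgebraic (ZMod p) F := Algebra.IsAlgebraic.of_finite _ _
  have hsep : Algebra.IsSeparable (ZMod p) F := inferInstance
  obtain ⟨B, hBdef⟩ : ∃ B, B = Algebra.traceForm (ZMod p) F := ⟨_, rfl⟩
  have hBnd : B.Nondegenerate := hBdef ▸ traceForm_nondegenerate (ZMod p) F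
  have hBrefl : B.IsRefl := hBdef ▸ (Algebra.traceForm_isSymm (ZMod p)).isRefl
  -- finrank of F over ZMod p is m
  have hcard : Fintype.card F = p ^ Module.finrank (ZMod p) F := by
    have := Module.card_eq_pow_finrank (K := ZMod p) (V := F)
    rwa [ZMod.card] at this
  have hfr : Module.finrank (ZMod p) F = m := by
    have : p ^ m = p ^ Module.finrank (ZMod p) F := by rw [← hq, hcard]
    exact (Nat.pow_right_injective hp1 this).symm
  -- L is injective
  have hLinj : Function.Injective L := by
    rw [← LinearMap.ker_eq_bot]
    rw [Submodule.eq_bot_iff]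
    intro a ha
    rw [LinearMap.mem_ker] at ha
    apply hBnd.1 a
    intro x
    by_cases hx0 : x = 0
    · simp [hBdef, hx0, Algebra.traceForm_apply]
    · have key : ∀ d ∈ D, Algebra.trace (ZMod p) F (a * d) = 0 := by
        intro d hd
        have := congrFun ha ⟨d, hd⟩
        rwa [hL] at this
      rcases hD.2.2 x hx0 with h | h
      · simpa [hBdef, Algebra.traceForm_apply] using key x h
      · have := key (-x) h
        rw [mul_neg, map_neg, neg_eq_zero] at this
        simpa [hBdef, Algebra.traceForm_apply] using this
  -- cardinality of D: 2|D| + 1 = p^m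
  have hDcard : 2 * D.card + 1 = p ^ m := by
    have := skew_card D hD Finset.univ (Finset.mem_univ _) (fun x _ => Finset.mem_univ _)
    rw [Finset.card_univ, hq, Finset.filter_univ_mem] at this
    omega
  -- the key computation: every r-dimensional subspace H of F gives the same support size
  have key : ∀ H : Submodule (ZMod p) F, Module.finrank (ZMod p) H = r →
      ∀ k, (Finset.univ.filter
        (fun d : {x // x ∈ D} => ∃ x ∈ Submodule.map L H, x d ≠ 0)).card = k →
      2 * k + p ^ (m - r) = p ^ m := by
    intro H hH k hk
    obtain ⟨W, hW⟩ : ∃ W, W = B.orthogonal H := ⟨_, rfl⟩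
    -- dimension of W
    have hWfr : Module.finrank (ZMod p) W = m - r := by
      rw [hW, LinearMap.BilinForm.finrank_orthogonal hBnd, hfr, hH]
    have hWcard : Fintype.card W = p ^ (m - r) := by
      have := Module.card_eq_pow_finrank (K := ZMod p) (V := W)
      rwa [ZMod.card, hWfr] at this
    -- W as a finset
    obtain ⟨WF, hWF⟩ : ∃ WF, WF = Set.toFinset (W : Set F) := ⟨_, rfl⟩
    have hWFmem : ∀ x : F, x ∈ WF ↔ x ∈ W := by
      intro x; rw [hWF, Set.mem_toFinset, SetLike.mem_coe]
    have hWFcard : WF.card = p ^ (m - r) := by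
      rw [hWF, Set.toFinset_card]
      exact hWcard
    have hWskew : 2 * (WF.filter (fun x => x ∈ D)).card + 1 = p ^ (m - r) := by
      rw [← hWFcard]
      exact (skew_card D hD WF (by rw [hWFmem]; exact W.zero_mem)
        (fun x hx => by rw [hWFmem] at hx ⊢; exact W.neg_mem hx)).symm
    -- membership in W characterizes vanishing
    have hmem : ∀ d : {x // x ∈ D},
        ((d : F) ∈ W ↔ ¬ ∃ x ∈ Submodule.map L H, x d ≠ 0) := by
      intro d
      rw [hW, LinearMap.BilinForm.mem_orthogonal_iff]
      simp only [LinearMap.isOrtho_def, hBdef, Algebra.traceForm_apply]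
      constructor
      · rintro h ⟨x, ⟨a, ha, rfl⟩, hx⟩
        exact hx (by rw [hL]; exact h a ha)
      · intro h a ha
        by_contra hne
        exact h ⟨L a, ⟨a, ha, rfl⟩, by rw [hL]; exact hne⟩
    -- the support card
    have hsplit : (Finset.univ.filter
        (fun d : {x // x ∈ D} => ∃ x ∈ Submodule.map L H, x d ≠ 0)).card
        + (WF.filter (fun x => x ∈ D)).card = D.card := by
      have h1 : (Finset.univ.filter
          (fun d : {x // x ∈ D} => ∃ x ∈ Submodule.map L H, x d ≠ 0)).card
          = (D.filter (fun x => x ∉ WF)).card := by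
        refine Finset.card_bij (fun d _ => (d : F)) ?_ ?_ ?_
        · intro d hd
          rw [Finset.mem_filter] at hd ⊢
          refine ⟨d.2, ?_⟩
          show (d : F) ∉ WF
          rw [hWFmem]
          intro hWmem
          exact ((hmem d).mp hWmem) hd.2
        · intro a _ b _ h; exact Subtype.ext h
        · intro b hb
          rw [Finset.mem_filter] at hb
          refine ⟨⟨b, hb.1⟩, ?_, rfl⟩
          rw [Finset.mem_filter]
          refine ⟨Finset.mem_univ _, ?_⟩
          have := hb.2
          rw [hWFmem] at this
          by_contra hcon
          exact this ((hmem ⟨b, hb.1⟩).mpr hcon)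
      have h2 : (WF.filter (fun x => x ∈ D)).card
          = (D.filter (fun x => x ∈ WF)).card := by
        congr 1
        ext x
        simp only [Finset.mem_filter]
        tauto
      have h4 : (D.filter (fun x => x ∉ WF)).card
          + (D.filter (fun x => x ∈ WF)).card = D.card := by
        rw [← Finset.card_union_of_disjoint]
        · congr 1
          ext x
          simp only [Finset.mem_union, Finset.mem_filter]
          tauto
        · rw [Finset.disjoint_left]
          intro a ha ha'
          rw [Finset.mem_filter] at ha
          rw [Finset.mem_filter] at ha'
          exact ha.2 ha'.2
      rw [h1, h2]
      exact h4
    rw [← hk, ← hWskew, ← hDcard, ← hsplit]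
    ring
  -- the defining set for ghw
  obtain ⟨S, hSdef⟩ : ∃ S : Set ℕ, S = {k | ∃ U : Submodule (ZMod p) ({x // x ∈ D} → ZMod p),
    U ≤ LinearMap.range L ∧ Module.finrank (ZMod p) ↥U = r ∧
    (Finset.univ.filter (fun i : {x // x ∈ D} => ∃ x ∈ U, x i ≠ 0)).card = k} := ⟨_, rfl⟩
  -- every element of S satisfies the equation
  have hSall : ∀ k ∈ S, 2 * k + p ^ (m - r) = p ^ m := by
    rw [hSdef]
    rintro k ⟨U, hUle, hUfr, hUcard⟩
    set H := U.comap L with hH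
    have hmap : Submodule.map L H = U := Submodule.map_comap_eq_self hUle
    have hHfr : Module.finrank (ZMod p) H = r := by
      have e := Submodule.equivMapOfInjective L hLinj H
      rw [← hUfr, ← hmap]
      exact e.finrank_eq
    exact key H hHfr k (by rw [hmap]; exact hUcard)
  -- S is nonempty: take the span of r basis vectors
  have hSne : S.Nonempty := by
    rw [hSdef]
    have hbex : ∃ H : Submodule (ZMod p) F, Module.finrank (ZMod p) H = r := by
      let b := Module.finBasis (ZMod p) F
      refine ⟨Submodule.span (ZMod p)
        (Set.range (fun i : Fin r => b (Fin.castLE (by rw [hfr]; exact hrm) i))), ?_⟩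
      rw [finrank_span_eq_card]
      · simp
      · exact b.linearIndependent.comp _ (Fin.castLE_injective _)
    obtain ⟨H, hHfr⟩ := hbex
    refine ⟨_, Submodule.map L H, LinearMap.map_le_range, ?_, rfl⟩
    rw [← hHfr]
    exact (Submodule.equivMapOfInjective L hLinj H).finrank_eq.symm
  -- conclude
  have hmemInf : sInf S ∈ S := Nat.sInf_mem hSne
  have heq : 2 * sInf S + p ^ (m - r) = p ^ m := hSall _ hmemInf
  have hghw : ghw (LinearMap.range L) r = sInf S := by
    rw [hSdef]
    unfold ghw
    congr!
  rw [hghw]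
  have hpow : p ^ (m - r) * p ^ r = p ^ m := by
    rw [← pow_add]
    congr 1
    omega
  have h1 : 1 ≤ p ^ r := Nat.one_le_pow _ _ (by omega)
  -- arithmetic: (sInf S) * (2 * p^r) = (p^r - 1) * p^m
  have : 2 * sInf S * p ^ r + p ^ m = p ^ m * p ^ r := by
    calc 2 * sInf S * p ^ r + p ^ m
        = 2 * sInf S * p ^ r + p ^ (m - r) * p ^ r := by rw [hpow]
      _ = (2 * sInf S + p ^ (m - r)) * p ^ r := by ring
      _ = p ^ m * p ^ r := by rw [heq]
  zify [h1] at this ⊢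
  linarith
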